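/- If a 3-uniform hypergraph H admits a proper 3-coloring, then the graph G' obtained from its incidence graph G = (Q, S, E) by attaching a pendant vertex p^s to each s ∈ S admits a valid 4-role coloring, with role graph the star K_{1,3} centered at color 4. -/

import Mathlib

def IsRoleColoring {V C : Type*} (G : SimpleGraph V) (α : V → C) : Prop :=
  Function.Surjective α ∧
    ∀ u v : V, α u = α v → α '' (G.neighborSet u) = α '' (G.neighborSet v)

/-- Vertex set of `G'`: hypergraph vertices `Q`, hyperedges `S_H`, and one
pendant vertex `p^s` for each hyperedge `s`. -/
def W17 (Q : Type*) (SH : Finset (Finset Q)) : Type _ :=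
  Q ⊕ ({e // e ∈ SH} ⊕ {e // e ∈ SH})

/-- Base adjacency for `G'`: `q — s` when `q ∈ s`, and `s — p^s`. -/
def rel17 {Q : Type*} (SH : Finset (Finset Q)) : W17 Q SH → W17 Q SH → Prop
  | .inl q, .inr (.inl s) => q ∈ s.val
  | .inr (.inl s), .inr (.inr s') => s = s'
  | _, _ => False

/-- The graph `G'` obtained from the incidence graph of `(Q, SH)` by attaching
a pendant vertex `p^s` to each hyperedge vertex `s`. -/
def G17 {Q : Type*} (SH : Finset (Finset Q)) : SimpleGraph (W17 Q SH) :=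
  SimpleGraph.fromRel (rel17 SH)

/-- If a 3-uniform hypergraph admits a proper 3-coloring, then the graph `G'`
obtained from its incidence graph by attaching a pendant vertex to each
hyperedge vertex admits a valid 4-role coloring whose role graph is the star
`K_{1,3}` centered at color 4 (here the color `3 : Fin 4`): every edge of `G'`
joins a vertex of color 4 to a vertex of another color. -/
theorem hypergraph_three_coloring_four_role {Q : Type*} [Fintype Q] [DecidableEq Q]
    (SH : Finset (Finset Q)) (huniform : ∀ e ∈ SH, e.card = 3)
    (hconn : (G17 SH).Connected) (hSH : SH.Nonempty)
    (hcol : ∃ β : Q → Fin 3, ∀ e ∈ SH, ∃ q₁ ∈ e, ∃ q₂ ∈ e, β q₁ ≠ β q₂) :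
    ∃ α : W17 Q SH → Fin 4, IsRoleColoring (G17 SH) α ∧
      ∀ u v : W17 Q SH, (G17 SH).Adj u v →
        ((α u = 3 ∧ α v ≠ 3) ∨ (α v = 3 ∧ α u ≠ 3)) := by
  classical
  obtain ⟨β, hβ⟩ := hcol
  have hcs : ∀ c : Fin 3, (c.castSucc : Fin 4) ≠ 3 := by
    intro c h
    have := c.isLt
    simp [Fin.ext_iff] at h
    omega
  -- every color ≠ 3 is a castSucc
  have hcs' : ∀ x : Fin 4, x ≠ 3 → ∃ c : Fin 3, x = c.castSucc := by
    intro x hx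
    have hxlt : x.val < 3 := by
      have := x.isLt
      rcases Nat.lt_or_ge x.val 3 with h | h
      · exact h
      · exfalso; exact hx (by ext; omega)
    exact ⟨⟨x.val, hxlt⟩, by ext; simp⟩
  -- pendant color choice
  have key : ∀ e ∈ SH, ∃ c : Fin 3, e.image β ∪ {c} = Finset.univ := by
    intro e he
    obtain ⟨q₁, hq₁, q₂, hq₂, hne⟩ := hβ e he
    have h2 : 1 < (e.image β).card :=
      Finset.one_lt_card.2 ⟨_, Finset.mem_image_of_mem β hq₁, _,
        Finset.mem_image_of_mem β hq₂, hne⟩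
    by_cases himg : e.image β = Finset.univ
    · exact ⟨0, by rw [himg]; simp⟩
    · have hsub : e.image β ⊆ Finset.univ := Finset.subset_univ _
      obtain ⟨c, -, hc⟩ := Finset.exists_of_ssubset (hsub.ssubset_of_ne himg)
      refine ⟨c, Finset.eq_univ_of_card _ ?_⟩
      have hcard : (e.image β ∪ {c}).card = (e.image β).card + 1 := by
        rw [Finset.union_comm, ← Finset.insert_eq, Finset.card_insert_of_notMem hc]
      have hle : (e.image β ∪ {c}).card ≤ Fintype.card (Fin 3) := Finset.card_le_univ _
      simp only [Fintype.card_fin] at hle ⊢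
      omega
  set pcol : {e // e ∈ SH} → Fin 3 := fun s => (key s.1 s.2).choose with hpcol
  have hpcolspec : ∀ s : {e // e ∈ SH}, s.1.image β ∪ {pcol s} = Finset.univ :=
    fun s => (key s.1 s.2).choose_spec
  set α : W17 Q SH → Fin 4 := fun w =>
    match w with
    | .inl q => (β q).castSucc
    | .inr (.inl _) => 3
    | .inr (.inr s) => (pcol s).castSucc with hα
  -- every q lies in some hyperedge
  have hq_edge : ∀ q : Q, ∃ s : {e // e ∈ SH}, q ∈ s.1 := by
    intro q
    obtain ⟨e₀, he₀⟩ := hSH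
    have hne : (Sum.inl q : W17 Q SH) ≠ Sum.inr (Sum.inl ⟨e₀, he₀⟩) := by
      intro h; cases h
    obtain ⟨w⟩ := hconn.preconnected (Sum.inl q) (Sum.inr (Sum.inl ⟨e₀, he₀⟩))
    cases w with
    | @cons _ b _ hadj p =>
    replace hadj := (SimpleGraph.fromRel_adj ..).1 hadj
    obtain ⟨-, h | h⟩ := hadj
    · rcases b with q' | s | s
      · exact absurd h not_false
      · exact ⟨s, h⟩
      · exact absurd h not_false
    · rcases b with q' | s | s <;> exact absurd h not_false
  -- adjacency characterization
  have hadj_iff : ∀ u v : W17 Q SH, (G17 SH).Adj u v ↔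
      u ≠ v ∧ (rel17 SH u v ∨ rel17 SH v u) := by
    intro u v; rw [G17, SimpleGraph.fromRel_adj]
  -- Claim A: image of neighborhood of a hyperedge vertex
  have claimA : ∀ s : {e // e ∈ SH},
      α '' (G17 SH).neighborSet (Sum.inr (Sum.inl s)) = {x : Fin 4 | x ≠ 3} := by
    intro s
    ext x
    simp only [Set.mem_image, SimpleGraph.mem_neighborSet, Set.mem_setOf_eq]
    constructor
    · rintro ⟨v, hv, rfl⟩
      replace hv := (hadj_iff _ _).1 hv
      obtain ⟨hne, h | h⟩ := hv
      · rcases v with q | s' | s'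
        · exact absurd h not_false
        · exact absurd h not_false
        · exact hcs _
      · rcases v with q | s' | s'
        · exact hcs _
        · exact absurd h not_false
        · exact absurd h not_false
    · intro hx
      obtain ⟨c, rfl⟩ := hcs' x hx
      have hc : c ∈ s.1.image β ∪ {pcol s} := by rw [hpcolspec]; exact Finset.mem_univ c
      rw [Finset.mem_union] at hc
      rcases hc with hc | hc
      · obtain ⟨q, hq, hqc⟩ := Finset.mem_image.1 hc
        refine ⟨Sum.inl q, ?_, by simp [hα, hqc]⟩
        refine (hadj_iff _ _).2 ?_
        exact ⟨fun h => (by cases h), Or.inr hq⟩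
      · rw [Finset.mem_singleton] at hc
        refine ⟨Sum.inr (Sum.inr s), ?_, by simp [hα, hc]⟩
        refine (hadj_iff _ _).2 ?_
        refine ⟨fun h => ?_, Or.inl rfl⟩
        cases h
  -- Claim B: image of neighborhood of a Q-vertex
  have claimB : ∀ q : Q,
      α '' (G17 SH).neighborSet (Sum.inl q) = {(3 : Fin 4)} := by
    intro q
    ext x
    simp only [Set.mem_image, SimpleGraph.mem_neighborSet, Set.mem_singleton_iff]
    constructor
    · rintro ⟨v, hv, rfl⟩
      replace hv := (hadj_iff _ _).1 hv
      obtain ⟨hne, h | h⟩ := hv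
      · rcases v with q' | s' | s'
        · exact absurd h not_false
        · rfl
        · exact absurd h not_false
      · rcases v with q' | s' | s' <;> exact absurd h not_false
    · rintro rfl
      obtain ⟨s, hs⟩ := hq_edge q
      refine ⟨Sum.inr (Sum.inl s), ?_, rfl⟩
      refine (hadj_iff _ _).2 ?_
      exact ⟨fun h => (by cases h), Or.inl hs⟩
  -- Claim C: image of neighborhood of a pendant vertex
  have claimC : ∀ s : {e // e ∈ SH},
      α '' (G17 SH).neighborSet (Sum.inr (Sum.inr s)) = {(3 : Fin 4)} := by
    intro s
    ext x
    simp only [Set.mem_image, SimpleGraph.mem_neighborSet, Set.mem_singleton_iff]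
    constructor
    · rintro ⟨v, hv, rfl⟩
      replace hv := (hadj_iff _ _).1 hv
      obtain ⟨hne, h | h⟩ := hv
      · rcases v with q' | s' | s' <;> exact absurd h not_false
      · rcases v with q' | s' | s'
        · exact absurd h not_false
        · rfl
        · exact absurd h not_false
    · rintro rfl
      refine ⟨Sum.inr (Sum.inl s), ?_, rfl⟩
      refine (hadj_iff _ _).2 ?_
      refine ⟨fun h => ?_, Or.inr rfl⟩
      cases h
  refine ⟨α, ⟨?_, ?_⟩, ?_⟩
  · -- surjectivity
    intro x
    obtain ⟨e₀, he₀⟩ := hSH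
    set s₀ : {e // e ∈ SH} := ⟨e₀, he₀⟩
    by_cases hx : x = 3
    · exact ⟨Sum.inr (Sum.inl s₀), hx.symm⟩
    · have : x ∈ α '' (G17 SH).neighborSet (Sum.inr (Sum.inl s₀)) := by
        rw [claimA]; exact hx
      obtain ⟨v, -, hv⟩ := this
      exact ⟨v, hv⟩
  · -- role coloring condition
    intro u v huv
    rcases u with q | s | s <;> rcases v with q' | s' | s'
    · rw [claimB, claimB]
    · exact absurd huv (hcs (β q))
    · rw [claimB, claimC]
    · exact absurd huv.symm (hcs (β q'))
    · rw [claimA, claimA]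
    · exact absurd huv.symm (hcs (pcol s'))
    · rw [claimC, claimB]
    · exact absurd huv (hcs (pcol s))
    · rw [claimC, claimC]
  · -- star structure
    intro u v huv
    rw [hadj_iff] at huv
    obtain ⟨hne, h | h⟩ := huv
    · rcases u with q | s | s <;> rcases v with q' | s' | s' <;>
        first
          | exact absurd h not_false
          | exact Or.inr ⟨rfl, hcs _⟩
          | exact Or.inl ⟨rfl, hcs _⟩
    · rcases u with q | s | s <;> rcases v with q' | s' | s' <;>
        first
          | exact absurd h not_false
          | exact Or.inr ⟨rfl, hcs _⟩
          | exact Or.inl ⟨rfl, hcs _⟩
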